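/- Let N ≥ 2 and let h: [0,1] → [0,1] be a quasisymmetric homeomorphism. Then the grid h(𝒟_N), whose level-k family is {h(P) : P ∈ 𝒟_N^k}, is a C-quasisymmetric good grid on ([0,1], Lebesgue measure) for some constant C ≥ 1. -/

import Mathlib

open MeasureTheory ENNReal Set

noncomputable section

namespace BesovPaper

variable {I : Type*}

/-- A quasi-metric on `I` with quasi-triangle constant `Cρ`. -/
structure IsQuasiMetric (ρ : I → I → ℝ) (Cρ : ℝ) : Prop where
  one_le : 1 ≤ Cρ
  refl : ∀ x, ρ x x = 0
  pos : ∀ x y, x ≠ y → 0 < ρ x y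
  symm : ∀ x y, ρ x y = ρ y x
  triangle : ∀ x y z, ρ x z ≤ Cρ * (ρ x y + ρ y z)

/-- quasi-ball -/
def qball (ρ : I → I → ℝ) (x : I) (r : ℝ) : Set I := {y | ρ x y < r}

/-- diameter with respect to a quasi-metric -/
def qdiam (ρ : I → I → ℝ) (S : Set I) : ℝ :=
  sSup ((fun pr : I × I => ρ pr.1 pr.2) '' (S ×ˢ S))

/-- distance from a point to a set -/
def qdistSet (ρ : I → I → ℝ) (x : I) (S : Set I) : ℝ := sInf ((ρ x) '' S)

/-- Two quasi-metrics are power-law equivalent. -/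
def PowerLawEquiv (ρ ρ' : I → I → ℝ) : Prop :=
  ∃ γ : ℝ, 0 < γ ∧ ∃ C : ℝ, 1 ≤ C ∧ ∀ x y,
    C⁻¹ * ρ x y ^ γ ≤ ρ' x y ∧ ρ' x y ≤ C * ρ x y ^ γ

/-- Ahlfors regular quasi-metric (measure) space with regularity exponent `D`,
constant `CA` and scale `r0`. -/
structure IsAhlfors [MeasurableSpace I] (d : I → I → ℝ) (m : Measure I)
    (D CA r0 : ℝ) : Prop where
  quasi : ∃ Cd : ℝ, IsQuasiMetric d Cd
  D_pos : 0 < D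
  CA_one_le : 1 ≤ CA
  r0_pos : 0 < r0
  lower : ∀ x : I, ∀ r : ℝ, 0 < r → r ≤ r0 →
    ENNReal.ofReal (CA⁻¹ * r ^ D) ≤ m (qball d x r)
  upper : ∀ x : I, ∀ r : ℝ, 0 < r → r ≤ r0 →
    m (qball d x r) ≤ ENNReal.ofReal (CA * r ^ D)

/-- A grid : a sequence of finite families of measurable sets of positive measure,
each being a partition of `I` up to measure zero, nested, and generating the σ-algebra. -/
structure IsGrid [inst : MeasurableSpace I] (m : Measure I) (P : ℕ → Set (Set I)) : Prop where
  total_finite : m Set.univ ≠ ∞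
  finite : ∀ k, (P k).Finite
  measurable : ∀ k, ∀ Q ∈ P k, MeasurableSet Q
  pos : ∀ k, ∀ Q ∈ P k, 0 < m Q
  cover : ∀ k, m (Set.univ \ ⋃ Q ∈ P k, Q) = 0
  ae_disjoint : ∀ k, ∀ Q ∈ P k, ∀ R ∈ P k, Q ≠ R → m (Q ∩ R) = 0
  nested : ∀ k, ∀ Q ∈ P (k + 1), ∃ R ∈ P k, Q ⊆ R
  generates : MeasurableSpace.generateFrom (⋃ k, P k) = inst

/-- A good grid with constants `0 < lamhat ≤ lam < 1`. -/
structure IsGoodGrid [MeasurableSpace I] (m : Measure I) (P : ℕ → Set (Set I))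
    (lamhat lam : ℝ) extends IsGrid m P : Prop where
  lamhat_pos : 0 < lamhat
  lamhat_le : lamhat ≤ lam
  lam_lt_one : lam < 1
  ratio : ∀ k, ∀ Q ∈ P (k + 1), ∀ R ∈ P k, Q ⊆ R →
    ENNReal.ofReal lamhat * m R ≤ m Q ∧ m Q ≤ ENNReal.ofReal lam * m R

/-- A good grid adapted to a quasi-metric `α`, with exponent `η`, constants
`c1, c2, c3, C ≥ 0` and contraction ratio `κ ∈ (0,1)`. -/
structure IsAdaptedGrid [MeasurableSpace I] (m : Measure I) (P : ℕ → Set (Set I))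
    (α : I → I → ℝ) (η c1 c2 c3 C κ : ℝ) : Prop where
  eta_pos : 0 < η
  c1_nonneg : 0 ≤ c1
  c2_nonneg : 0 ≤ c2
  c3_nonneg : 0 ≤ c3
  C_nonneg : 0 ≤ C
  kappa_pos : 0 < κ
  kappa_lt_one : κ < 1
  inner_ball : ∀ k : ℕ, 1 ≤ k → ∀ Q ∈ P k, ∃ z ∈ Q, qball α z (c1 * κ ^ k) ⊆ Q
  diam_le : ∀ k : ℕ, 1 ≤ k → ∀ Q ∈ P k, qdiam α Q ≤ c2 * κ ^ k
  bdry : ∀ k : ℕ, 1 ≤ k → ∀ Q ∈ P k, ∀ t : ℝ, 0 < t →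
    m {x | x ∈ Q ∧ qdistSet α x Qᶜ ≤ c3 * t * κ ^ k} ≤ ENNReal.ofReal (C * t ^ η) * m Q

/-- The canonical `(s,p)`-Souza atom on `Q`. -/
def souzaAtom [MeasurableSpace I] (m : Measure I) (s p : ℝ) (Q : Set I) : I → ℂ :=
  fun x => ((m Q).toReal ^ (s - 1 / p) : ℝ) • Q.indicator (fun _ => (1 : ℂ)) x

/-- The level-`k` part of an atomic series with coefficients `c`. -/
def levelSum [MeasurableSpace I] (m : Measure I) (P : ℕ → Set (Set I)) (s p : ℝ)
    (c : ℕ → Set I → ℂ) (k : ℕ) : I → ℂ :=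
  fun x => ∑' Q : P k, c k Q * souzaAtom m s p Q x

/-- The `ℓ^q(ℓ^p)` norm of a coefficient family. -/
def coefNorm (P : ℕ → Set (Set I)) (p : ℝ) (q : ℝ≥0∞) (c : ℕ → Set I → ℂ) : ℝ≥0∞ :=
  if q = ∞ then ⨆ k, (∑' Q : P k, (‖c k Q‖₊ : ℝ≥0∞) ^ p) ^ (1 / p)
  else (∑' k, (∑' Q : P k, (‖c k Q‖₊ : ℝ≥0∞) ^ p) ^ (q.toReal / p)) ^ (1 / q.toReal)

/-- `c` is a Besov representation of `f`: the atomic series converges absolutely in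
`L^p` and its sum is `f` almost everywhere. -/
def IsBesovRepr [MeasurableSpace I] (m : Measure I) (P : ℕ → Set (Set I)) (s p : ℝ)
    (f : I → ℂ) (c : ℕ → Set I → ℂ) : Prop :=
  (∀ᵐ x ∂m, f x = ∑' k, levelSum m P s p c k x) ∧
  (∑' k, eLpNorm (levelSum m P s p c k) (ENNReal.ofReal p) m) ≠ ∞

/-- Membership in the Besov space `ℬ^s_{p,q}(𝒫)`. -/
def MemBesov [MeasurableSpace I] (m : Measure I) (P : ℕ → Set (Set I))
    (s p : ℝ) (q : ℝ≥0∞) (f : I → ℂ) : Prop :=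
  MemLp f (ENNReal.ofReal p) m ∧
  ∃ c : ℕ → Set I → ℂ, IsBesovRepr m P s p f c ∧ coefNorm P p q c ≠ ∞

/-- The Besov norm: infimum of coefficient norms over all representations. -/
def besovNorm [MeasurableSpace I] (m : Measure I) (P : ℕ → Set (Set I))
    (s p : ℝ) (q : ℝ≥0∞) (f : I → ℂ) : ℝ≥0∞ :=
  ⨅ (c : ℕ → Set I → ℂ) (_ : IsBesovRepr m P s p f c), coefNorm P p q c

/-- `k₀(Q)`: the first level of the grid containing an element inside `Q`. -/
def gridIndex (P : ℕ → Set (Set I)) (Q : Set I) : ℕ :=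
  sInf {k | ∃ R ∈ P k, R ⊆ Q}

/-- Lebesgue measure on the unit interval. -/
def mUI : Measure unitInterval := (volume : Measure unitInterval)

/-- The `N`-adic grid on `[0,1]`: level `k` consists of the closed intervals
`[i N^{-k}, (i+1) N^{-k}]`, `0 ≤ i < N^k`. -/
def dyadicGridN (N : ℕ) (k : ℕ) : Set (Set unitInterval) :=
  {Q | ∃ i : ℕ, i < N ^ k ∧
    Q = {x : unitInterval | (i : ℝ) / (N : ℝ) ^ k ≤ (x : ℝ) ∧
      (x : ℝ) ≤ ((i : ℝ) + 1) / (N : ℝ) ^ k}}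

/-- A grid of intervals on `[0,1]` is `Cqs`-quasisymmetric: elements of the same
level with touching closures have comparable lengths. -/
def IsQSGrid (P : ℕ → Set (Set unitInterval)) (Cqs : ℝ) : Prop :=
  1 ≤ Cqs ∧ (∀ k, ∀ Q ∈ P k, Q.OrdConnected) ∧
  ∀ k : ℕ, ∀ Q ∈ P k, ∀ R ∈ P k, (closure Q ∩ closure R).Nonempty →
    Cqs⁻¹ ≤ (mUI Q).toReal / (mUI R).toReal ∧
      (mUI Q).toReal / (mUI R).toReal ≤ Cqs

/-- A self-map of the unit interval is quasisymmetric with constant `M`. -/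
def QuasiSymmetricUI (h : unitInterval → unitInterval) (M : ℝ) : Prop :=
  1 ≤ M ∧ ∀ x y z : unitInterval,
    (y : ℝ) < (x : ℝ) → (x : ℝ) - (y : ℝ) = (z : ℝ) - (x : ℝ) →
      M⁻¹ ≤ ((h z : ℝ) - (h x : ℝ)) / ((h x : ℝ) - (h y : ℝ)) ∧
      ((h z : ℝ) - (h x : ℝ)) / ((h x : ℝ) - (h y : ℝ)) ≤ M

/-- A self-map of the unit interval is bi-Lipschitz with constant `L`. -/
def BiLipschitzUI (g : unitInterval → unitInterval) (L : ℝ) : Prop :=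
  1 ≤ L ∧ ∀ x y : unitInterval,
    L⁻¹ * |(x : ℝ) - (y : ℝ)| ≤ |(g x : ℝ) - (g y : ℝ)| ∧
    |(g x : ℝ) - (g y : ℝ)| ≤ L * |(x : ℝ) - (y : ℝ)|

/-- The image grid `h(𝒫)`. -/
def imageGrid (h : unitInterval → unitInterval)
    (P : ℕ → Set (Set unitInterval)) : ℕ → Set (Set unitInterval) :=
  fun k => (fun Q => h '' Q) '' P k

/-- grid point `i/N^k` as an element of the unit interval (clamped). -/
def pt (N k i : ℕ) : unitInterval :=
  ⟨min ((i : ℝ) / (N : ℝ) ^ k) 1, le_min (by positivity) zero_le_one, min_le_right _ _⟩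

variable {N : ℕ}

lemma Npow_pos (hN : 2 ≤ N) (k : ℕ) : (0 : ℝ) < (N : ℝ) ^ k := by
  have : (0:ℝ) < N := by exact_mod_cast (by omega : 0 < N)
  positivity

lemma pt_coe (hN : 2 ≤ N) {k i : ℕ} (hi : i ≤ N ^ k) :
    (pt N k i : ℝ) = (i : ℝ) / (N : ℝ) ^ k := by
  apply min_eq_left
  rw [div_le_one (Npow_pos hN k)]
  exact_mod_cast hi

lemma pt_le (hN : 2 ≤ N) {k i j : ℕ} (hij : i ≤ j) (hj : j ≤ N ^ k) :
    pt N k i ≤ pt N k j := by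
  rw [← Subtype.coe_le_coe, pt_coe hN (hij.trans hj), pt_coe hN hj]
  gcongr

lemma pt_lt (hN : 2 ≤ N) {k i j : ℕ} (hij : i < j) (hj : j ≤ N ^ k) :
    pt N k i < pt N k j := by
  rw [← Subtype.coe_lt_coe, pt_coe hN ((le_of_lt hij).trans hj), pt_coe hN hj]
  apply div_lt_div_of_pos_right ?_ (Npow_pos hN k)
  exact_mod_cast hij

lemma mem_dyadic_iff (hN : 2 ≤ N) {k : ℕ} {Q : Set unitInterval} :
    Q ∈ dyadicGridN N k ↔ ∃ i < N ^ k, Q = Icc (pt N k i) (pt N k (i + 1)) := by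
  have key : ∀ i : ℕ, i < N ^ k →
      {x : unitInterval | (i : ℝ) / (N : ℝ) ^ k ≤ (x : ℝ) ∧
        (x : ℝ) ≤ ((i : ℝ) + 1) / (N : ℝ) ^ k} = Icc (pt N k i) (pt N k (i + 1)) := by
    intro i hi
    ext x
    simp only [mem_setOf_eq, mem_Icc, ← Subtype.coe_le_coe, pt_coe hN hi.le,
      pt_coe hN (by omega : i + 1 ≤ N ^ k)]
    push_cast
    tauto
  constructor
  · rintro ⟨i, hi, rfl⟩; exact ⟨i, hi, key i hi⟩
  · rintro ⟨i, hi, rfl⟩; exact ⟨i, hi, (key i hi).symm⟩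


lemma mUI_Icc (a b : unitInterval) : mUI (Icc a b) = ENNReal.ofReal ((b : ℝ) - a) := by
  rcases le_or_gt a b with hab | hab
  · rw [show mUI = volume.comap Subtype.val from rfl,
      (MeasurableEmbedding.subtype_coe (measurableSet_Icc)).comap_apply]
    rw [show Subtype.val '' Icc a b = Icc (a : ℝ) (b : ℝ) by
      ext y; constructor
      · rintro ⟨x, hx, rfl⟩; exact ⟨hx.1, hx.2⟩
      · rintro ⟨h1, h2⟩
        exact ⟨⟨y, le_trans a.2.1 h1, le_trans h2 b.2.2⟩, ⟨h1, h2⟩, rfl⟩]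
    rw [Real.volume_Icc]
  · have hba : (b:ℝ) ≤ (a:ℝ) := Subtype.coe_le_coe.mpr hab.le
    rw [Icc_eq_empty hab.not_ge, measure_empty,
      Eq.comm, ENNReal.ofReal_eq_zero]
    linarith

lemma mUI_singleton (x : unitInterval) : mUI {x} = 0 := by
  rw [show mUI = volume.comap Subtype.val from rfl,
    (MeasurableEmbedding.subtype_coe (measurableSet_Icc)).comap_apply, image_singleton]
  simp

lemma mUI_univ : mUI univ = 1 := by
  rw [show mUI = volume.comap Subtype.val from rfl,
    (MeasurableEmbedding.subtype_coe (measurableSet_Icc)).comap_apply]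
  rw [image_univ, Subtype.range_coe, Real.volume_Icc]
  norm_num

/-- length of the image of the `i`-th level-`k` grid interval -/
def glen (g : unitInterval → unitInterval) (N k i : ℕ) : ℝ :=
  (g (pt N k (i + 1)) : ℝ) - (g (pt N k i) : ℝ)

variable {g : unitInterval → unitInterval} {M : ℝ}

lemma glen_pos (hN : 2 ≤ N) (hm : StrictMono g) {k i : ℕ} (hi : i + 1 ≤ N ^ k) :
    0 < glen g N k i :=
  sub_pos.mpr (Subtype.coe_lt_coe.mpr (hm (pt_lt hN (Nat.lt_succ_self i) hi)))

lemma measure_GP (hN : 2 ≤ N) (hm : StrictMono g) {k i : ℕ} (hi : i + 1 ≤ N ^ k) :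
    mUI (Icc (g (pt N k i)) (g (pt N k (i + 1)))) = ENNReal.ofReal (glen g N k i) :=
  mUI_Icc _ _

lemma glen_step (hN : 2 ≤ N) (hm : StrictMono g) (hqs : QuasiSymmetricUI g M)
    {k i : ℕ} (hi : i + 2 ≤ N ^ k) :
    glen g N k (i + 1) ≤ M * glen g N k i ∧ glen g N k i ≤ M * glen g N k (i + 1) := by
  have hM : (0:ℝ) < M := lt_of_lt_of_le one_pos hqs.1
  set y := pt N k i
  set x := pt N k (i + 1)
  set z := pt N k (i + 2)
  have hyx : (y : ℝ) < (x : ℝ) := Subtype.coe_lt_coe.mpr (pt_lt hN (by omega) (by omega))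
  have hd : (x : ℝ) - (y : ℝ) = (z : ℝ) - (x : ℝ) := by
    rw [pt_coe hN (by omega : i ≤ N ^ k), pt_coe hN (by omega : i + 1 ≤ N ^ k),
      pt_coe hN hi]
    push_cast; ring
  obtain ⟨h1, h2⟩ := hqs.2 x y z hyx hd
  have hpos : (0:ℝ) < glen g N k i := glen_pos hN hm (by omega)
  have hpos' : (0:ℝ) < glen g N k (i + 1) := glen_pos hN hm hi
  have hr : ((g z : ℝ) - (g x : ℝ)) / ((g x : ℝ) - (g y : ℝ)) = glen g N k (i+1) / glen g N k i := by
    rfl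
  rw [hr] at h1 h2
  constructor
  · exact (div_le_iff₀ hpos).mp h2
  · have := (le_div_iff₀ hpos).mp h1
    calc glen g N k i = M * (M⁻¹ * glen g N k i) := by field_simp
    _ ≤ M * glen g N k (i + 1) := by
        apply mul_le_mul_of_nonneg_left _ hM.le
        linarith [this]

lemma glen_chain (hN : 2 ≤ N) (hm : StrictMono g) (hqs : QuasiSymmetricUI g M)
    {k : ℕ} (d : ℕ) : ∀ a : ℕ, a + d + 1 ≤ N ^ k →
    glen g N k a ≤ M ^ d * glen g N k (a + d) ∧
    glen g N k (a + d) ≤ M ^ d * glen g N k a := by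
  induction d with
  | zero => intro a _; simp
  | succ d ih =>
    intro a ha
    obtain ⟨ih1, ih2⟩ := ih a (by omega)
    obtain ⟨st1, st2⟩ := glen_step hN hm hqs (k := k) (i := a + d) (by omega)
    have hM : (0:ℝ) < M := lt_of_lt_of_le one_pos hqs.1
    have hMd : (0:ℝ) ≤ M ^ d := by positivity
    constructor
    · calc glen g N k a ≤ M ^ d * glen g N k (a + d) := ih1
        _ ≤ M ^ d * (M * glen g N k (a + d + 1)) :=
            mul_le_mul_of_nonneg_left st2 hMd
        _ = M ^ (d + 1) * glen g N k (a + (d + 1)) := by rw [pow_succ, Nat.add_assoc]; ring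
    · calc glen g N k (a + (d + 1)) = glen g N k (a + d + 1) := by rw [Nat.add_assoc]
        _ ≤ M * glen g N k (a + d) := st1
        _ ≤ M * (M ^ d * glen g N k a) := mul_le_mul_of_nonneg_left ih2 hM.le
        _ = M ^ (d + 1) * glen g N k a := by rw [pow_succ]; ring

lemma glen_le_of_le (hN : 2 ≤ N) (hm : StrictMono g) (hqs : QuasiSymmetricUI g M)
    {k a b : ℕ} (hab : a ≤ b) (hb : b + 1 ≤ N ^ k) :
    glen g N k a ≤ M ^ (b - a) * glen g N k b ∧
    glen g N k b ≤ M ^ (b - a) * glen g N k a := by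
  obtain ⟨d, rfl⟩ := Nat.exists_eq_add_of_le hab
  rw [show a + d - a = d by omega]
  exact glen_chain hN hm hqs d a hb

lemma pt_succ_level (hN : 2 ≤ N) (k m : ℕ) : pt N (k + 1) (N * m) = pt N k m := by
  apply Subtype.ext
  show min _ _ = min _ _
  congr 1
  rw [pow_succ]
  push_cast
  rw [mul_comm ((N:ℝ)^k) (N:ℝ), mul_div_mul_left _ _ (by positivity : (N:ℝ) ≠ 0)]

lemma glen_parent (hN : 2 ≤ N) {k i : ℕ} :
    glen g N k i = ∑ j ∈ Finset.range N, glen g N (k + 1) (N * i + j) := by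
  have tel := Finset.sum_range_sub (fun j => (g (pt N (k + 1) (N * i + j)) : ℝ)) N
  have : ∀ j ∈ Finset.range N, glen g N (k + 1) (N * i + j)
      = (g (pt N (k+1) (N * i + (j+1))) : ℝ) - (g (pt N (k+1) (N * i + j)) : ℝ) := by
    intro j _; rw [glen, Nat.add_assoc]
  rw [Finset.sum_congr rfl this, tel, add_zero, show N * i + N = N * (i + 1) by ring,
    pt_succ_level hN, pt_succ_level hN, glen]

lemma pt_mono (hN : 2 ≤ N) {k i j : ℕ} (hij : i ≤ j) : pt N k i ≤ pt N k j := by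
  rw [← Subtype.coe_le_coe]
  apply min_le_min _ le_rfl
  apply div_le_div_of_nonneg_right (by exact_mod_cast hij) (Npow_pos hN k).le

lemma glen_nonneg (hN : 2 ≤ N) (hm : StrictMono g) {k i : ℕ} :
    0 ≤ glen g N k i :=
  sub_nonneg.mpr (Subtype.coe_le_coe.mpr (hm.monotone (pt_mono hN (Nat.le_succ i))))

lemma one_le_A (hqs : QuasiSymmetricUI g M) : 1 ≤ M ^ (N - 1) :=
  one_le_pow₀ hqs.1

lemma glen_comparable (hN : 2 ≤ N) (hm : StrictMono g) (hqs : QuasiSymmetricUI g M)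
    {k i : ℕ} (hi : i + 1 ≤ N ^ k) {j1 j2 : ℕ} (hj1 : j1 < N) (hj2 : j2 < N) :
    glen g N (k + 1) (N * i + j1) ≤ M ^ (N - 1) * glen g N (k + 1) (N * i + j2) := by
  have hM : (1:ℝ) ≤ M := hqs.1
  have hle : ∀ a b : ℕ, a ≤ b → b < N →
      glen g N (k+1) (N*i+a) ≤ M ^ (N-1) * glen g N (k+1) (N*i+b) ∧
      glen g N (k+1) (N*i+b) ≤ M ^ (N-1) * glen g N (k+1) (N*i+a) := by
    intro a b hab hb
    have hbd : N * i + b + 1 ≤ N ^ (k + 1) := by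
      have : N * i + b + 1 ≤ N * (i + 1) := by rw [Nat.mul_succ]; omega
      calc N * i + b + 1 ≤ N * (i+1) := this
        _ ≤ N * N ^ k := by exact Nat.mul_le_mul_left N hi
        _ = N ^ (k+1) := (pow_succ' N k).symm
    obtain ⟨h1, h2⟩ := glen_le_of_le hN hm hqs (Nat.add_le_add_left hab _) hbd
    have hexp : M ^ (N * i + b - (N * i + a)) ≤ M ^ (N - 1) :=
      pow_le_pow_right₀ hM (by omega)
    have hga : 0 ≤ glen g N (k+1) (N*i+a) := glen_nonneg hN hm
    have hgb : 0 ≤ glen g N (k+1) (N*i+b) := glen_nonneg hN hm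
    exact ⟨h1.trans (mul_le_mul_of_nonneg_right hexp hgb),
      h2.trans (mul_le_mul_of_nonneg_right hexp hga)⟩
  rcases le_total j1 j2 with h | h
  · exact (hle j1 j2 h hj2).1
  · exact (hle j2 j1 h hj1).2

lemma child_bounds (hN : 2 ≤ N) (hm : StrictMono g) (hqs : QuasiSymmetricUI g M)
    {k i j : ℕ} (hi : i + 1 ≤ N ^ k) (hj : j < N) :
    ((N : ℝ) * M ^ (N - 1))⁻¹ * glen g N k i ≤ glen g N (k + 1) (N * i + j) ∧
    glen g N (k + 1) (N * i + j) ≤ (1 + (M ^ (N - 1))⁻¹)⁻¹ * glen g N k i := by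
  have hM : (1:ℝ) ≤ M := hqs.1
  have hA : (1:ℝ) ≤ M ^ (N - 1) := one_le_A hqs
  have hApos : (0:ℝ) < M ^ (N - 1) := lt_of_lt_of_le one_pos hA
  have hNpos : (0:ℝ) < N := by exact_mod_cast (by omega : 0 < N)
  have hsum := glen_parent (g := g) hN (k := k) (i := i)
  constructor
  · -- lower bound
    have : glen g N k i ≤ (N : ℝ) * (M ^ (N - 1) * glen g N (k + 1) (N * i + j)) := by
      rw [hsum]
      calc ∑ j' ∈ Finset.range N, glen g N (k+1) (N * i + j')
          ≤ ∑ _j' ∈ Finset.range N, M ^ (N-1) * glen g N (k+1) (N*i+j) := by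
            apply Finset.sum_le_sum
            intro j' hj'
            exact glen_comparable hN hm hqs hi (Finset.mem_range.mp hj') hj
        _ = (N:ℝ) * (M ^ (N-1) * glen g N (k+1) (N*i+j)) := by
            rw [Finset.sum_const, Finset.card_range, nsmul_eq_mul]
    rw [inv_mul_le_iff₀ (by positivity)]
    linarith [this]
  · -- upper bound
    set j' : ℕ := if j = 0 then 1 else 0 with hj'def
    have hj'N : j' < N := by rw [hj'def]; split <;> omega
    have hjj' : j ≠ j' := by rw [hj'def]; split <;> omega
    have hcmp : glen g N (k+1) (N*i+j) ≤ M ^ (N-1) * glen g N (k+1) (N*i+j') :=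
      glen_comparable hN hm hqs hi hj hj'N
    have hsub : glen g N (k+1) (N*i+j) + glen g N (k+1) (N*i+j') ≤ glen g N k i := by
      rw [hsum, ← Finset.sum_pair (f := fun x => glen g N (k+1) (N*i+x)) hjj']
      apply Finset.sum_le_sum_of_subset_of_nonneg
      · intro x hx
        simp only [Finset.mem_insert, Finset.mem_singleton] at hx
        rcases hx with rfl | rfl <;> simp [Finset.mem_range, hj, hj'N]
      · intro x _ _; exact glen_nonneg hN hm
    have key : (1 + (M ^ (N-1))⁻¹) * glen g N (k+1) (N*i+j) ≤ glen g N k i := by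
      have : (M ^ (N-1))⁻¹ * glen g N (k+1) (N*i+j) ≤ glen g N (k+1) (N*i+j') := by
        rw [inv_mul_le_iff₀ hApos]; exact hcmp
      linarith
    rw [inv_mul_eq_div, le_div_iff₀ (by positivity)]
    linarith [key]

lemma image_Icc' (hm : StrictMono g) (hsurj : Function.Surjective g) (a b : unitInterval) :
    g '' Icc a b = Icc (g a) (g b) :=
  (StrictMono.orderIsoOfSurjective g hm hsurj).image_Icc a b

lemma mem_imageGrid_iff (hN : 2 ≤ N) (hm : StrictMono g) (hsurj : Function.Surjective g)
    {k : ℕ} {S : Set unitInterval} :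
    S ∈ imageGrid g (dyadicGridN N) k ↔
      ∃ i < N ^ k, S = Icc (g (pt N k i)) (g (pt N k (i + 1))) := by
  constructor
  · rintro ⟨Q, hQ, rfl⟩
    obtain ⟨i, hi, rfl⟩ := (mem_dyadic_iff hN).mp hQ
    exact ⟨i, hi, image_Icc' hm hsurj _ _⟩
  · rintro ⟨i, hi, rfl⟩
    exact ⟨Icc (pt N k i) (pt N k (i + 1)), (mem_dyadic_iff hN).mpr ⟨i, hi, rfl⟩,
      image_Icc' hm hsurj _ _⟩

/-- find the grid interval containing a point `w` below `m/N^k`. -/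
lemma exists_mem_Icc_pt (hN : 2 ≤ N) {k m : ℕ} (hm0 : 1 ≤ m) (hmk : m ≤ N ^ k)
    (w : unitInterval) (hw : (w : ℝ) ≤ (m : ℝ) / (N : ℝ) ^ k) :
    ∃ j < m, pt N k j ≤ w ∧ w ≤ pt N k (j + 1) := by
  have hn : (0:ℝ) < (N:ℝ) ^ k := Npow_pos hN k
  set f : ℕ := (⌊(w : ℝ) * (N : ℝ) ^ k⌋).toNat with hf
  have hwn : (0:ℝ) ≤ (w : ℝ) * (N : ℝ) ^ k := mul_nonneg w.2.1 hn.le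
  have hz : (0:ℤ) ≤ ⌊(w:ℝ) * (N:ℝ) ^ k⌋ := Int.floor_nonneg.mpr hwn
  have hcast : ((f : ℕ) : ℝ) = ((⌊(w:ℝ) * (N:ℝ) ^ k⌋ : ℤ) : ℝ) := by
    rw [hf]; norm_cast
    rw [Int.toNat_of_nonneg]
    exact Int.floor_nonneg.mpr (by push_cast; exact hwn)
  have hfl : ((f : ℕ) : ℝ) ≤ (w : ℝ) * (N : ℝ) ^ k := by
    rw [hcast]; exact Int.floor_le _
  have hfu : (w : ℝ) * (N : ℝ) ^ k < (f : ℝ) + 1 := by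
    rw [hcast]; exact Int.lt_floor_add_one _
  rcases le_or_gt (f + 1) m with hcase | hcase
  · refine ⟨f, by omega, ?_, ?_⟩
    · rw [← Subtype.coe_le_coe, pt_coe hN (by omega), div_le_iff₀ hn]
      linarith [hfl]
    · rw [← Subtype.coe_le_coe, pt_coe hN (by omega), le_div_iff₀ hn]
      push_cast
      linarith [hfu]
  · -- then w = m / N^k exactly; take j = m - 1
    have hwm : (w : ℝ) = (m : ℝ) / (N : ℝ) ^ k := by
      apply le_antisymm hw
      rw [div_le_iff₀ hn]
      have : (m : ℝ) ≤ (f : ℝ) := by exact_mod_cast (by omega : m ≤ f)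
      linarith [hfl]
    refine ⟨m - 1, by omega, ?_, ?_⟩
    · rw [← Subtype.coe_le_coe, pt_coe hN (by omega), hwm]
      apply div_le_div_of_nonneg_right ?_ hn.le
      exact_mod_cast (by omega : m - 1 ≤ m)
    · rw [← Subtype.coe_le_coe, pt_coe hN (by omega : m - 1 + 1 ≤ N ^ k), hwm,
        show m - 1 + 1 = m by omega]

lemma union_dyadic (hN : 2 ≤ N) (k : ℕ) :
    ⋃ i ∈ Finset.range (N ^ k), Icc (pt N k i) (pt N k (i + 1)) = (univ : Set unitInterval) := by
  apply eq_univ_of_forall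
  intro w
  have hNk : 1 ≤ N ^ k := Nat.one_le_pow _ _ (by omega)
  have hn : (0:ℝ) < (N:ℝ) ^ k := Npow_pos hN k
  obtain ⟨j, hj, h1, h2⟩ := exists_mem_Icc_pt hN hNk le_rfl w
    (by rw [show ((N ^ k : ℕ) : ℝ) = (N:ℝ) ^ k by push_cast; ring, div_self hn.ne']
        exact w.2.2)
  exact mem_biUnion (Finset.mem_range.mpr hj) ⟨h1, h2⟩

section Gen
variable (hN : 2 ≤ N) (hm : StrictMono g) (hsurj : Function.Surjective g)
include hN hm hsurj

omit hN in
lemma g_apply_symm (x : unitInterval) :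
    g ((StrictMono.orderIsoOfSurjective g hm hsurj).symm x) = x :=
  (StrictMono.orderIsoOfSurjective g hm hsurj).apply_symm_apply x

lemma Iic_image {k i : ℕ} (hi1 : 1 ≤ i) (hik : i ≤ N ^ k) :
    Iic (g (pt N k i)) =
      ⋃ j ∈ Finset.range i, Icc (g (pt N k j)) (g (pt N k (j + 1))) := by
  ext x
  simp only [mem_Iic, mem_iUnion, Finset.mem_range, mem_Icc, exists_prop]
  constructor
  · intro hx
    set e := StrictMono.orderIsoOfSurjective g hm hsurj
    set w := e.symm x with hw
    have hgw : g w = x := g_apply_symm hm hsurj x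
    have hwle : w ≤ pt N k i := by
      rw [← hm.le_iff_le, hgw]; exact hx
    obtain ⟨j, hj, h1, h2⟩ := exists_mem_Icc_pt hN hi1 hik w
      (by rw [← pt_coe hN hik]; exact Subtype.coe_le_coe.mpr hwle)
    exact ⟨j, hj, by rw [← hgw]; exact ⟨hm.monotone h1, hm.monotone h2⟩⟩
  · rintro ⟨j, hj, h1, h2⟩
    exact h2.trans (hm.monotone (pt_mono hN (by omega)))

lemma meas_lt (c : unitInterval) :
    MeasurableSet[MeasurableSpace.generateFrom (⋃ k, imageGrid g (dyadicGridN N) k)]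
      {x : unitInterval | (x : ℝ) < (c : ℝ)} := by
  set 𝒜 := MeasurableSpace.generateFrom (⋃ k, imageGrid g (dyadicGridN N) k) with h𝒜
  set e := StrictMono.orderIsoOfSurjective g hm hsurj
  have key : {x : unitInterval | (x : ℝ) < (c : ℝ)} =
      ⋃ (p : ℕ × ℕ) (_ : 1 ≤ p.2 ∧ p.2 ≤ N ^ p.1 ∧ (g (pt N p.1 p.2) : ℝ) < (c : ℝ)),
        Iic (g (pt N p.1 p.2)) := by
    ext x
    simp only [mem_setOf_eq, mem_iUnion, mem_Iic, exists_prop]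
    constructor
    · intro hx
      have hxc : x < c := Subtype.coe_lt_coe.mp hx
      have huv : e.symm x < e.symm c := e.symm.strictMono hxc
      have huv' : ((e.symm x : unitInterval) : ℝ) < ((e.symm c : unitInterval) : ℝ) :=
        Subtype.coe_lt_coe.mpr huv
      set u : ℝ := ((e.symm x : unitInterval) : ℝ)
      set v : ℝ := ((e.symm c : unitInterval) : ℝ)
      have hN1 : (1:ℝ) < (N:ℝ) := by exact_mod_cast (by omega : 1 < N)
      obtain ⟨k, hk⟩ := pow_unbounded_of_one_lt (R := ℝ) (y := (N:ℝ)) (v - u)⁻¹ hN1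
      have hn : (0:ℝ) < (N:ℝ) ^ k := Npow_pos hN k
      have hvu : (0:ℝ) < v - u := by linarith
      have h1n : 1 < (v - u) * (N:ℝ) ^ k := by
        calc (1:ℝ) = (v - u) * (v - u)⁻¹ := by field_simp
          _ < (v - u) * (N:ℝ) ^ k := mul_lt_mul_of_pos_left hk hvu
      set i : ℕ := (⌊u * (N : ℝ) ^ k⌋).toNat + 1 with hi
      have hu0 : (0:ℝ) ≤ u := (e.symm x : unitInterval).2.1
      have hun : (0:ℝ) ≤ u * (N:ℝ) ^ k := mul_nonneg hu0 hn.le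
      have hfl : ((((⌊u * (N : ℝ) ^ k⌋).toNat : ℕ)) : ℝ) = ((⌊u * (N : ℝ)^k⌋ : ℤ) : ℝ) := by
        norm_cast
        rw [Int.toNat_of_nonneg]
        exact Int.floor_nonneg.mpr (by push_cast; exact hun)
      have hui : u * (N:ℝ)^k < (i : ℕ) := by
        rw [hi]; push_cast; rw [hfl]; exact Int.lt_floor_add_one _
      have hiv : ((i : ℕ) : ℝ) < v * (N:ℝ)^k := by
        rw [hi]; push_cast; rw [hfl]
        have : ((⌊u * (N : ℝ)^k⌋ : ℤ) : ℝ) ≤ u * (N:ℝ)^k := Int.floor_le _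
        nlinarith
      have hv1 : v ≤ 1 := (e.symm c : unitInterval).2.2
      have hik : i ≤ N ^ k := by
        have h' : ((i:ℕ):ℝ) < (N:ℝ)^k := by nlinarith
        have h'' : i < N ^ k := by exact_mod_cast h'
        omega
      have hptu : (e.symm x : unitInterval) < pt N k i := by
        rw [← Subtype.coe_lt_coe, pt_coe hN hik, lt_div_iff₀ hn]
        exact hui
      have hptv : pt N k i < (e.symm c : unitInterval) := by
        rw [← Subtype.coe_lt_coe, pt_coe hN hik, div_lt_iff₀ hn]
        exact hiv
      refine ⟨⟨k, i⟩, ⟨by omega, hik, ?_⟩, ?_⟩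
      · have h' := hm hptv
        rw [g_apply_symm hm hsurj] at h'
        exact Subtype.coe_lt_coe.mpr h'
      · have h' := hm hptu
        rw [g_apply_symm hm hsurj] at h'
        exact h'.le
    · rintro ⟨⟨k, i⟩, ⟨_, _, h3⟩, hx⟩
      exact lt_of_le_of_lt (Subtype.coe_le_coe.mpr hx) h3
  rw [key]
  apply MeasurableSet.iUnion
  intro p
  apply MeasurableSet.iUnion
  rintro ⟨h1, h2, _⟩
  rw [Iic_image hN hm hsurj h1 h2]
  apply Finset.measurableSet_biUnion
  intro j hj
  apply MeasurableSpace.measurableSet_generateFrom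
  exact mem_iUnion.mpr ⟨p.1, (mem_imageGrid_iff hN hm hsurj).mpr
    ⟨j, by have := Finset.mem_range.mp hj; omega, rfl⟩⟩

lemma generates_eq :
    MeasurableSpace.generateFrom (⋃ k, imageGrid g (dyadicGridN N) k) =
      (inferInstance : MeasurableSpace unitInterval) := by
  apply le_antisymm
  · apply MeasurableSpace.generateFrom_le
    intro S hS
    obtain ⟨k, hk⟩ := mem_iUnion.mp hS
    obtain ⟨i, _, rfl⟩ := (mem_imageGrid_iff hN hm hsurj).mp hk
    exact measurableSet_Icc
  · have hins : (inferInstance : MeasurableSpace unitInterval) =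
        MeasurableSpace.comap (Subtype.val) (borel ℝ) := rfl
    rw [hins, borel_eq_generateFrom_Iio ℝ, MeasurableSpace.comap_generateFrom]
    apply MeasurableSpace.generateFrom_le
    rintro t ⟨s, ⟨r, rfl⟩, rfl⟩
    rcases le_or_gt r 0 with hr | hr
    · have : Subtype.val ⁻¹' Iio r = (∅ : Set unitInterval) := by
        ext x; simp only [mem_preimage, mem_Iio, mem_empty_iff_false, iff_false, not_lt]
        exact le_trans hr x.2.1
      rw [this]; exact MeasurableSpace.measurableSet_empty _
    · rcases lt_or_ge 1 r with hr1 | hr1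
      · have : Subtype.val ⁻¹' Iio r = (univ : Set unitInterval) := by
          ext x; simp only [mem_preimage, mem_Iio, mem_univ, iff_true]
          exact lt_of_le_of_lt x.2.2 hr1
        rw [this, ← Set.compl_empty]
        exact MeasurableSpace.measurableSet_compl _ _ (MeasurableSpace.measurableSet_empty _)
      · have : Subtype.val ⁻¹' Iio r = {x : unitInterval | (x : ℝ) < ((⟨r, hr.le, hr1⟩ : unitInterval) : ℝ)} := rfl
        rw [this]
        exact meas_lt hN hm hsurj _

end Gen


section MainMono
variable (hN : 2 ≤ N) (hm : StrictMono g) (hsurj : Function.Surjective g)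
  (hqs : QuasiSymmetricUI g M)

include hN hm hsurj hqs in
lemma glen_ratio {k i j : ℕ} (hi : i + 1 ≤ N ^ k) (hj : j + 1 ≤ N ^ k)
    (hji : j ≤ i + 1) (hij : i ≤ j + 1) :
    M⁻¹ ≤ glen g N k i / glen g N k j ∧ glen g N k i / glen g N k j ≤ M := by
  have hM : (0:ℝ) < M := lt_of_lt_of_le one_pos hqs.1
  have hgi : 0 < glen g N k i := glen_pos hN hm hi
  have hgj : 0 < glen g N k j := glen_pos hN hm hj
  rcases (by omega : i = j ∨ j = i + 1 ∨ i = j + 1) with rfl | rfl | rfl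
  · rw [div_self hgi.ne']
    exact ⟨inv_le_one_of_one_le₀ hqs.1, hqs.1⟩
  · obtain ⟨s1, s2⟩ := glen_step hN hm hqs (k := k) (i := i) (by omega)
    constructor
    · rw [le_div_iff₀ hgj]
      calc M⁻¹ * glen g N k (i+1) ≤ M⁻¹ * (M * glen g N k i) := by
            apply mul_le_mul_of_nonneg_left s1 (by positivity)
        _ = glen g N k i := by field_simp
    · rw [div_le_iff₀ hgj]
      exact s2
  · obtain ⟨s1, s2⟩ := glen_step hN hm hqs (k := k) (i := j) (by omega)
    constructor
    · rw [le_div_iff₀ hgj]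
      calc M⁻¹ * glen g N k j ≤ M⁻¹ * (M * glen g N k (j+1)) := by
            apply mul_le_mul_of_nonneg_left s2 (by positivity)
        _ = glen g N k (j+1) := by field_simp
    · rw [div_le_iff₀ hgj]
      exact s1

include hN hm hsurj hqs in
theorem main_mono :
    IsGoodGrid mUI (imageGrid g (dyadicGridN N))
      (((N : ℝ) * M ^ (N - 1))⁻¹) ((1 + (M ^ (N - 1))⁻¹)⁻¹) ∧
    IsQSGrid (imageGrid g (dyadicGridN N)) M := by
  have hM : (1:ℝ) ≤ M := hqs.1
  have hA : (1:ℝ) ≤ M ^ (N - 1) := one_le_A hqs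
  have hApos : (0:ℝ) < M ^ (N - 1) := lt_of_lt_of_le one_pos hA
  have hNR : (2:ℝ) ≤ (N:ℝ) := by exact_mod_cast hN
  constructor
  · refine ⟨⟨?_, ?_, ?_, ?_, ?_, ?_, ?_, ?_⟩, ?_, ?_, ?_, ?_⟩
    · rw [mUI_univ]; exact one_ne_top
    · intro k
      have : dyadicGridN N k ⊆ (fun i => Icc (pt N k i) (pt N k (i+1))) '' (Iio (N ^ k)) := by
        intro Q hQ
        obtain ⟨i, hi, rfl⟩ := (mem_dyadic_iff hN).mp hQ
        exact ⟨i, hi, rfl⟩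
      exact (((finite_Iio _).image _).subset this).image _
    · intro k Q hQ
      obtain ⟨i, _, rfl⟩ := (mem_imageGrid_iff hN hm hsurj).mp hQ
      exact measurableSet_Icc
    · intro k Q hQ
      obtain ⟨i, hi, rfl⟩ := (mem_imageGrid_iff hN hm hsurj).mp hQ
      rw [measure_GP hN hm (by omega)]
      exact ENNReal.ofReal_pos.mpr (glen_pos hN hm (by omega))
    · intro k
      have huniv : ⋃ Q ∈ imageGrid g (dyadicGridN N) k, Q = univ := by
        apply eq_univ_of_forall
        intro x
        obtain ⟨w, rfl⟩ := hsurj x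
        have := union_dyadic hN k
        have hw : w ∈ ⋃ i ∈ Finset.range (N ^ k), Icc (pt N k i) (pt N k (i + 1)) := by
          rw [this]; trivial
        obtain ⟨i, hi, h1, h2⟩ := by
          simpa only [mem_iUnion, Finset.mem_range, mem_Icc, exists_prop] using hw
        exact mem_biUnion ((mem_imageGrid_iff hN hm hsurj).mpr ⟨i, hi, rfl⟩)
          ⟨hm.monotone h1, hm.monotone h2⟩
      simp [huniv]
    · intro k Q hQ R hR hQR
      obtain ⟨i, hi, rfl⟩ := (mem_imageGrid_iff hN hm hsurj).mp hQ
      obtain ⟨j, hj, rfl⟩ := (mem_imageGrid_iff hN hm hsurj).mp hR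
      have hnull : ∀ a b : ℕ, a < b → b + 1 ≤ N ^ k →
          mUI (Icc (g (pt N k a)) (g (pt N k (a+1))) ∩ Icc (g (pt N k b)) (g (pt N k (b+1)))) = 0 := by
        intro a b hab hb
        refine measure_mono_null ?_ (mUI_singleton (g (pt N k b)))
        rintro x ⟨⟨_, hx2⟩, ⟨hx3, _⟩⟩
        have : x ≤ g (pt N k b) := hx2.trans (hm.monotone (pt_mono hN (by omega)))
        exact le_antisymm this hx3
      rcases lt_trichotomy i j with h | h | h
      · exact hnull i j h hj
      · exact absurd (by rw [h]) hQR
      · rw [inter_comm]; exact hnull j i h hi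
    · intro k Q hQ
      obtain ⟨mm, hmm, rfl⟩ := (mem_imageGrid_iff hN hm hsurj).mp hQ
      refine ⟨Icc (g (pt N k (mm / N))) (g (pt N k (mm / N + 1))),
        (mem_imageGrid_iff hN hm hsurj).mpr ⟨mm / N, ?_, rfl⟩, ?_⟩
      · rw [Nat.div_lt_iff_lt_mul (by omega)]
        calc mm < N ^ (k + 1) := hmm
          _ = N ^ k * N := pow_succ N k
      · apply Icc_subset_Icc
        · apply hm.monotone
          rw [show pt N k (mm / N) = pt N (k+1) (N * (mm / N)) from (pt_succ_level hN k _).symm]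
          apply pt_mono hN
          rw [Nat.mul_comm]
          exact Nat.div_mul_le_self mm N
        · apply hm.monotone
          rw [show pt N k (mm / N + 1) = pt N (k+1) (N * (mm / N + 1)) from (pt_succ_level hN k _).symm]
          apply pt_mono hN
          have h1 := Nat.div_add_mod mm N
          have h2 := Nat.mod_lt mm (show 0 < N by omega)
          rw [Nat.mul_succ]
          omega
    · exact generates_eq hN hm hsurj
    · -- lamhat_pos
      apply inv_pos.mpr; positivity
    · -- lamhat_le
      apply inv_anti₀ (by positivity)
      have : (M ^ (N-1))⁻¹ ≤ 1 := inv_le_one_of_one_le₀ hA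
      nlinarith
    · -- lam_lt_one
      apply inv_lt_one_of_one_lt₀
      have : (0:ℝ) < (M ^ (N-1))⁻¹ := by positivity
      linarith
    · -- ratio
      intro k Q hQ R hR hQR
      obtain ⟨mm, hmm, rfl⟩ := (mem_imageGrid_iff hN hm hsurj).mp hQ
      obtain ⟨i, hi, rfl⟩ := (mem_imageGrid_iff hN hm hsurj).mp hR
      have hNi : N * i ≤ mm := by
        by_contra hc
        push_neg at hc
        have hle : g (pt N k i) ≤ g (pt N (k+1) mm) :=
          (hQR ⟨le_rfl, hm.monotone (pt_mono hN (Nat.le_succ mm))⟩).1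
        rw [show pt N k i = pt N (k+1) (N * i) from (pt_succ_level hN k i).symm,
          hm.le_iff_le] at hle
        exact absurd hle (not_le.mpr (pt_lt (k := k+1) hN hc (by
          calc N * i ≤ N * N ^ k := Nat.mul_le_mul_left N (by omega)
            _ = N ^ (k+1) := (pow_succ' N k).symm)))
      have hup : mm + 1 ≤ N * (i + 1) := by
        by_contra hc
        push_neg at hc
        have hle : g (pt N (k+1) (mm+1)) ≤ g (pt N k (i+1)) :=
          (hQR ⟨hm.monotone (pt_mono hN (Nat.le_succ mm)), le_rfl⟩).2
        rw [show pt N k (i+1) = pt N (k+1) (N * (i+1)) from (pt_succ_level hN k (i+1)).symm,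
          hm.le_iff_le] at hle
        exact absurd hle (not_le.mpr (pt_lt (k := k+1) hN hc (by omega)))
      set j : ℕ := mm - N * i with hjdef
      have hjN : j < N := by
        have : N * (i + 1) = N * i + N := Nat.mul_succ N i
        omega
      have hmmeq : mm = N * i + j := by omega
      obtain ⟨cb1, cb2⟩ := child_bounds hN hm hqs (k := k) (i := i) (j := j) (by omega) hjN
      rw [measure_GP hN hm (by omega), measure_GP hN hm (by omega),
        ← ENNReal.ofReal_mul (by positivity), ← ENNReal.ofReal_mul (by positivity)]
      rw [hmmeq]
      exact ⟨ENNReal.ofReal_le_ofReal cb1, ENNReal.ofReal_le_ofReal cb2⟩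
  · refine ⟨hqs.1, ?_, ?_⟩
    · intro k Q hQ
      obtain ⟨i, _, rfl⟩ := (mem_imageGrid_iff hN hm hsurj).mp hQ
      exact ordConnected_Icc
    · intro k Q hQ R hR hcl
      obtain ⟨i, hi, rfl⟩ := (mem_imageGrid_iff hN hm hsurj).mp hQ
      obtain ⟨j, hj, rfl⟩ := (mem_imageGrid_iff hN hm hsurj).mp hR
      rw [IsClosed.closure_eq isClosed_Icc, IsClosed.closure_eq isClosed_Icc] at hcl
      obtain ⟨x, ⟨hx1, hx2⟩, ⟨hx3, hx4⟩⟩ := hcl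
      have hji : j ≤ i + 1 := by
        by_contra hc
        push_neg at hc
        have : g (pt N k j) ≤ g (pt N k (i+1)) := hx3.trans hx2
        rw [hm.le_iff_le] at this
        exact absurd this (not_le.mpr (pt_lt hN hc (by omega)))
      have hij : i ≤ j + 1 := by
        by_contra hc
        push_neg at hc
        have : g (pt N k i) ≤ g (pt N k (j+1)) := hx1.trans hx4
        rw [hm.le_iff_le] at this
        exact absurd this (not_le.mpr (pt_lt hN hc (by omega)))
      rw [measure_GP hN hm (by omega), measure_GP hN hm (by omega),
        ENNReal.toReal_ofReal (glen_nonneg hN hm), ENNReal.toReal_ofReal (glen_nonneg hN hm)]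
      exact glen_ratio hN hm hsurj hqs (by omega) (by omega) hji hij

end MainMono

lemma symm_image_dyadic (hN : 2 ≤ N) {k : ℕ} {Q : Set unitInterval}
    (hQ : Q ∈ dyadicGridN N k) : (unitInterval.symm '' Q) ∈ dyadicGridN N k := by
  obtain ⟨i, hi, rfl⟩ := hQ
  have hn : (0:ℝ) < (N:ℝ) ^ k := Npow_pos hN k
  have hnk : ((N ^ k : ℕ) : ℝ) = (N:ℝ) ^ k := by push_cast; ring
  refine ⟨N ^ k - 1 - i, by omega, ?_⟩
  have hc : ((N ^ k - 1 - i : ℕ) : ℝ) = (N:ℝ) ^ k - 1 - (i : ℝ) := by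
    have : (N ^ k - 1 - i : ℕ) = N ^ k - (i + 1) := by omega
    rw [this, Nat.cast_sub (by omega)]
    push_cast
    ring
  ext x
  simp only [mem_image, mem_setOf_eq]
  constructor
  · rintro ⟨w, ⟨h1, h2⟩, rfl⟩
    rw [unitInterval.coe_symm_eq, hc]
    have h1' : (i:ℝ) ≤ (w:ℝ) * (N:ℝ)^k := (div_le_iff₀ hn).mp h1
    have h2' : (w:ℝ) * (N:ℝ)^k ≤ (i:ℝ) + 1 := (le_div_iff₀ hn).mp h2
    constructor
    · rw [div_le_iff₀ hn]; nlinarith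
    · rw [le_div_iff₀ hn]; nlinarith
  · intro ⟨h1, h2⟩
    refine ⟨unitInterval.symm x, ?_, unitInterval.symm_symm x⟩
    rw [unitInterval.coe_symm_eq]
    rw [hc] at h1 h2
    have h1' : (N:ℝ)^k - 1 - i ≤ (x:ℝ) * (N:ℝ)^k := (div_le_iff₀ hn).mp h1
    have h2' : (x:ℝ) * (N:ℝ)^k ≤ (N:ℝ)^k - 1 - i + 1 := (le_div_iff₀ hn).mp h2
    constructor
    · rw [div_le_iff₀ hn]; nlinarith
    · rw [le_div_iff₀ hn]; nlinarith

lemma imageGrid_symm (hN : 2 ≤ N) (h : unitInterval → unitInterval) (k : ℕ) :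
    imageGrid (h ∘ unitInterval.symm) (dyadicGridN N) k = imageGrid h (dyadicGridN N) k := by
  ext S
  have hinv : ∀ Q : Set unitInterval, unitInterval.symm '' (unitInterval.symm '' Q) = Q := by
    intro Q
    rw [image_image]
    simp only [unitInterval.symm_symm, image_id']
  constructor
  · rintro ⟨Q, hQ, rfl⟩
    refine ⟨unitInterval.symm '' Q, symm_image_dyadic hN hQ, ?_⟩
    show h '' (unitInterval.symm '' Q) = (h ∘ unitInterval.symm) '' Q
    rw [Set.image_comp]
  · rintro ⟨Q, hQ, rfl⟩
    refine ⟨unitInterval.symm '' Q, symm_image_dyadic hN hQ, ?_⟩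
    show (h ∘ unitInterval.symm) '' (unitInterval.symm '' Q) = h '' Q
    rw [Set.image_comp, hinv]

lemma qs_comp_symm (h : unitInterval → unitInterval) (M : ℝ)
    (hqs : QuasiSymmetricUI h M) : QuasiSymmetricUI (h ∘ unitInterval.symm) M := by
  refine ⟨hqs.1, ?_⟩
  intro x y z hyx hd
  have hM : (0:ℝ) < M := lt_of_lt_of_le one_pos hqs.1
  set y' := unitInterval.symm z
  set x' := unitInterval.symm x
  set z' := unitInterval.symm y
  have hxz : (x:ℝ) < (z:ℝ) := by linarith
  have hy'x' : (y' : ℝ) < (x' : ℝ) := by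
    rw [unitInterval.coe_symm_eq, unitInterval.coe_symm_eq]; linarith
  have hd' : (x' : ℝ) - (y' : ℝ) = (z' : ℝ) - (x' : ℝ) := by
    rw [unitInterval.coe_symm_eq, unitInterval.coe_symm_eq, unitInterval.coe_symm_eq]
    linarith
  obtain ⟨h1, h2⟩ := hqs.2 x' y' z' hy'x' hd'
  have hs : (0:ℝ) < ((h z' : ℝ) - (h x' : ℝ)) / ((h x' : ℝ) - (h y' : ℝ)) :=
    lt_of_lt_of_le (by positivity) h1
  have heq : (((h ∘ unitInterval.symm) z : ℝ) - ((h ∘ unitInterval.symm) x : ℝ)) /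
      (((h ∘ unitInterval.symm) x : ℝ) - ((h ∘ unitInterval.symm) y : ℝ)) =
      (((h z' : ℝ) - (h x' : ℝ)) / ((h x' : ℝ) - (h y' : ℝ)))⁻¹ := by
    show ((h y' : ℝ) - (h x' : ℝ)) / ((h x' : ℝ) - (h z' : ℝ)) = _
    rw [← neg_div_neg_eq, neg_sub, neg_sub, inv_div]
  rw [heq]
  constructor
  · exact inv_anti₀ hs h2
  · have := inv_anti₀ (inv_pos.mpr hM) h1
    rwa [inv_inv] at this


theorem statement_13
    (N : ℕ) (hN : 2 ≤ N)
    (h : unitInterval ≃ₜ unitInterval) (M : ℝ)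
    (hqs : QuasiSymmetricUI h M) :
    ∃ (Cqs lamhat lam : ℝ),
      IsGoodGrid mUI (imageGrid h (dyadicGridN N)) lamhat lam ∧
      IsQSGrid (imageGrid h (dyadicGridN N)) Cqs := by
  haveI : Inhabited unitInterval := ⟨0⟩
  rcases h.continuous.strictMono_of_inj_boundedOrder' h.injective with hmono | hanti
  · obtain ⟨hg, hq⟩ := main_mono hN hmono h.surjective hqs
    exact ⟨M, _, _, hg, hq⟩
  · have hsigma : StrictAnti (unitInterval.symm) := by
      intro a b hab
      rw [← Subtype.coe_lt_coe, unitInterval.coe_symm_eq, unitInterval.coe_symm_eq]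
      have := Subtype.coe_lt_coe.mpr hab
      linarith
    have hmono : StrictMono (⇑h ∘ unitInterval.symm) := hanti.comp hsigma
    have hsurj : Function.Surjective (⇑h ∘ unitInterval.symm) :=
      h.surjective.comp unitInterval.symm_bijective.surjective
    have hqs' := qs_comp_symm ⇑h M hqs
    have hgrid : imageGrid ⇑h (dyadicGridN N) =
        imageGrid (⇑h ∘ unitInterval.symm) (dyadicGridN N) :=
      funext fun k => (imageGrid_symm hN ⇑h k).symm
    rw [hgrid]
    obtain ⟨hg, hq⟩ := main_mono hN hmono hsurj hqs'
    exact ⟨M, _, _, hg, hq⟩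



end BesovPaper
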